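/- The extracted graphs are safe: if s → s', G or s ⇓ s', G in the graph-generating environment semantics, then the size-change graph G is safe for the pair of states (s, s'). -/

import Mathlib

/- Untyped λ-expressions. -/
inductive Exp : Type
  | var : String → Exp
  | app : Exp → Exp → Exp
  | lam : String → Exp → Exp
deriving DecidableEq

namespace Exp

/-- Free variables. -/
def fv : Exp → Finset String
  | var x => {x}
  | app e1 e2 => fv e1 ∪ fv e2
  | lam x e => fv e \ {x}

/-- The set of subexpressions of a λ-expression. -/
def subexp : Exp → Set Exp
  | var x => {var x}
  | app e1 e2 => insert (app e1 e2) (subexp e1 ∪ subexp e2)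
  | lam x e => insert (lam x e) (subexp e)

end Exp

/- Values (closures), environments and states of the environment-based
semantics.  An environment is a (partial) map from variable names to values;
a state `e:ρ` pairs an expression with an environment. -/
inductive Val : Type
  | clos : String → Exp → (String → Option Val) → Val

abbrev Env := String → Option Val
abbrev State := Exp × Env

/-- A value `λx.e:ρ` viewed as a state. -/
def Val.toState : Val → State
  | .clos x e ρ => (Exp.lam x e, ρ)

/-- The λ-expression component of a value. -/
def Val.toExp : Val → Exp
  | .clos x e _ => Exp.lam x e

def Env.update (ρ : Env) (x : String) (v : Val) : Env :=
  fun y => if y = x then some v else ρ y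

def Env.empty : Env := fun _ => none
/-- `Supp s s'` means `s' ∈ support(s)`, where
`support(e:ρ) = {e:ρ} ∪ ⋃_{x ∈ fv(e)} support(ρ(x))`. -/
inductive Supp : State → State → Prop
  | refl (s : State) : Supp s s
  | env {e : Exp} {ρ : Env} {x : String} {v : Val} {s' : State} :
      x ∈ e.fv → ρ x = some v → Supp v.toState s' → Supp (e, ρ) s'

/-- `s₁ ≻₁ s₂`: `s₂` is in the support of `s₁` and `s₁ ≠ s₂`. -/
def Gt1 (s1 s2 : State) : Prop := Supp s1 s2 ∧ s1 ≠ s2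

/-- `e₁:ρ₁ ≻₂ e₂:ρ₂`: `e₂` is a subexpression of `e₁`, `e₁ ≠ e₂`, and the
environments agree on `fv(e₂)`. -/
def Gt2 (s1 s2 : State) : Prop :=
  s2.1 ∈ Exp.subexp s1.1 ∧ s1.1 ≠ s2.1 ∧ ∀ x ∈ s2.1.fv, s1.2 x = s2.2 x

/-- `⪰` is the transitive closure of `≻₁ ∪ ≻₂ ∪ =`. -/
def Geq : State → State → Prop :=
  Relation.TransGen (fun s1 s2 => Gt1 s1 s2 ∨ Gt2 s1 s2 ∨ s1 = s2)

/-- `s₁ ≻ s₂` iff `s₁ ⪰ s₂` and `s₁ ≠ s₂`. -/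
def Gt (s1 s2 : State) : Prop := Geq s1 s2 ∧ s1 ≠ s2
/-- `GB s p` means the name path `p` belongs to the graph basis `gb(s)`:
`gb(e:ρ) = {ε} ∪ { xp | x ∈ fv(e), p ∈ gb(ρ(x)) }`. -/
inductive GB : State → List String → Prop
  | nil (s : State) : GB s []
  | cons {e : Exp} {ρ : Env} {x : String} {v : Val} {p : List String} :
      x ∈ e.fv → ρ x = some v → GB v.toState p → GB (e, ρ) (x :: p)

/-- `Valn s p s'` means `s̄(p) = s'`, the substate of `s` identified by the
name path `p`:  `s̄(ε) = s` and `(e:ρ)‾(xp) = (ρ(x))‾(p)`. -/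
inductive Valn : State → List String → State → Prop
  | nil (s : State) : Valn s [] s
  | cons {e : Exp} {ρ : Env} {x : String} {v : Val} {p : List String} {s' : State} :
      ρ x = some v → Valn v.toState p s' → Valn (e, ρ) (x :: p) s'
/-- Arc labels: `=` (eq) and `↓` (dec). -/
inductive Lab : Type
  | eq : Lab
  | dec : Lab
deriving DecidableEq

/-- Name paths; here the nodes of generated size-change graphs are `ε = []`
or single variables `[y]`. -/
abbrev NP := List String
abbrev Arc := NP × Lab × NP
abbrev ArcSet := Set Arc

/-- `id= = {ε =→ ε} ∪ {y =→ y | y ∈ s}`. -/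
def idEqS (s : Set String) : ArcSet :=
  {a | a = ([], Lab.eq, []) ∨ ∃ y ∈ s, a = ([y], Lab.eq, [y])}

/-- `id↓ = {ε ↓→ ε} ∪ {y =→ y | y ∈ s}`. -/
def idDecS (s : Set String) : ArcSet :=
  {a | a = ([], Lab.dec, []) ∨ ∃ y ∈ s, a = ([y], Lab.eq, [y])}

/-- The graph `{x =→ ε} ∪ {x ↓→ y | y ∈ s}` of the variable rule. -/
def varGraphS (x : String) (s : Set String) : ArcSet :=
  {a | a = ([x], Lab.eq, []) ∨ ∃ y ∈ s, a = ([x], Lab.dec, [y])}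

/-- `G₁^{-ε/λx.e₀}`: keep arcs between variables, replace `ε r→ z` (`z` a
variable) by `ε ↓→ z`, and, when `x ∉ fv(e₀)`, additionally replace each
arc `p r→ ε` by `p ↓→ ε`.  (`fve0` is `fv(e₀)`.) -/
def GminusS (x : String) (fve0 : Set String) (G1 : ArcSet) : ArcSet :=
  {a | (∃ (y : String) (r : Lab) (z : String), a = ([y], r, [z]) ∧ ([y], r, [z]) ∈ G1) ∨
       (∃ z : String, a = (([] : NP), Lab.dec, [z]) ∧ ∃ r, (([] : NP), r, [z]) ∈ G1) ∨
       (x ∉ fve0 ∧ ∃ p : NP, a = (p, Lab.dec, ([] : NP)) ∧ ∃ r, (p, r, ([] : NP)) ∈ G1)}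

/-- `G₂^{ε↦x}`: `y r→ x` for each `y r→ ε ∈ G₂`, and `ε ↓→ x` for each
`ε r→ ε ∈ G₂`. -/
def GepsS (x : String) (G2 : ArcSet) : ArcSet :=
  {a | (∃ (y : String) (r : Lab), a = ([y], r, [x]) ∧ ([y], r, ([] : NP)) ∈ G2) ∨
       (a = (([] : NP), Lab.dec, [x]) ∧ ∃ r, (([] : NP), r, ([] : NP)) ∈ G2)}

/-- `∪_{e₀}`: union restricted to arcs whose target is in `fv(e₀) ∪ {ε}`. -/
def unionRS (fve0 : Set String) (A B : ArcSet) : ArcSet :=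
  {a | a ∈ A ∪ B ∧ (a.2.2 = ([] : NP) ∨ ∃ y ∈ fve0, a.2.2 = [y])}

/-- The label set `R(x,z)` used in graph composition. -/
def labelsA (G1 G2 : ArcSet) (x z : NP) : Set Lab :=
  {r | ∃ y s, ((x, r, y) ∈ G1 ∧ (y, s, z) ∈ G2) ∨
              ((x, s, y) ∈ G1 ∧ (y, r, z) ∈ G2)}

/-- Composition `G₁;G₂` of size-change graphs (as arc sets): `x ↓→ z` whenever
`↓ ∈ R(x,z)`, and `x =→ z` whenever `R(x,z) = {=}`. -/
def compA (G1 G2 : ArcSet) : ArcSet :=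
  {a | (∃ x z, a = (x, Lab.dec, z) ∧ Lab.dec ∈ labelsA G1 G2 x z) ∨
       (∃ x z, a = (x, Lab.eq, z) ∧ labelsA G1 G2 x z = {Lab.eq})}
/- The graph-generating environment semantics:
judgements `e:ρ ⇓ v, G` and `e:ρ →x e':ρ', G` (x ∈ {r,d,c}). -/
mutual
  inductive EvalG : State → Val → ArcSet → Prop
    | value (x : String) (e : Exp) (ρ : Env) :
        EvalG (Exp.lam x e, ρ) (Val.clos x e ρ) (idEqS ↑(Exp.lam x e).fv)
    | var {ρ : Env} {x : String} {v : Val} :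
        ρ x = some v → EvalG (Exp.var x, ρ) v (varGraphS x ↑v.toExp.fv)
    | apply {s s' : State} {v : Val} {G' G : ArcSet} :
        CallGc s s' G' → EvalG s' v G → EvalG s v (compA G' G)
  inductive CallGc : State → State → ArcSet → Prop
    | call {e1 e2 : Exp} {ρ ρ0 : Env} {x : String} {e0 : Exp} {v2 : Val}
        {G1 G2 : ArcSet} :
        EvalG (e1, ρ) (Val.clos x e0 ρ0) G1 → EvalG (e2, ρ) v2 G2 →
        CallGc (Exp.app e1 e2, ρ) (e0, Env.update ρ0 x v2)
          (unionRS ↑e0.fv (GminusS x ↑e0.fv G1) (GepsS x G2))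
end

inductive CallGr : State → State → ArcSet → Prop
  | oper (e1 e2 : Exp) (ρ : Env) :
      CallGr (Exp.app e1 e2, ρ) (e1, ρ) (idDecS ↑e1.fv)

inductive CallGd : State → State → ArcSet → Prop
  | opnd {e1 : Exp} {ρ : Env} {v1 : Val} {G1 : ArcSet} (e2 : Exp) :
      EvalG (e1, ρ) v1 G1 → CallGd (Exp.app e1 e2, ρ) (e2, ρ) (idDecS ↑e2.fv)

/-- The graph-generating call relation (union of `→r`, `→d`, `→c`). -/
def CallGAny (s s' : State) (G : ArcSet) : Prop :=
  CallGr s s' G ∨ CallGd s s' G ∨ CallGc s s' G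
/-- A (generated) size-change graph, given by its arcs, is safe for the pair
of states `(s₁,s₂)`: `p₁ =→ p₂ ∈ G` implies `s̄₁(p₁) = s̄₂(p₂)`, and
`p₁ ↓→ p₂ ∈ G` implies `s̄₁(p₁) ≻ s̄₂(p₂)`. -/
def SafeArcs (G : ArcSet) (s1 s2 : State) : Prop :=
  (∀ p1 p2, (p1, Lab.eq, p2) ∈ G →
    ∀ t1 t2, Valn s1 p1 t1 → Valn s2 p2 t2 → t1 = t2) ∧
  (∀ p1 p2, (p1, Lab.dec, p2) ∈ G →
    ∀ t1 t2, Valn s1 p1 t1 → Valn s2 p2 t2 → Gt t1 t2)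

section AuxSafety


/-! ### Basic expression lemmas -/

lemma Exp.self_mem_subexp : ∀ e : Exp, e ∈ e.subexp := by
  intro e; cases e <;> simp [Exp.subexp]

lemma Exp.app_ne_left (e1 e2 : Exp) : Exp.app e1 e2 ≠ e1 := by
  intro h; have h2 := congrArg SizeOf.sizeOf h; simp at h2 <;> omega

lemma Exp.app_ne_right (e1 e2 : Exp) : Exp.app e1 e2 ≠ e2 := by
  intro h; have h2 := congrArg SizeOf.sizeOf h; simp at h2 <;> omega

lemma Exp.lam_ne_body (x : String) (e : Exp) : Exp.lam x e ≠ e := by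
  intro h; have h2 := congrArg SizeOf.sizeOf h; simp at h2 <;> omega

/-! ### Valn lemmas -/

lemma valn_nil {s t : State} (h : Valn s [] t) : t = s := by cases h; rfl

lemma valn_cons {e : Exp} {ρ : Env} {x : String} {p : List String} {t : State}
    (h : Valn (e, ρ) (x :: p) t) :
    ∃ v : Val, ρ x = some v ∧ Valn v.toState p t := by
  cases h with
  | cons hv hr => exact ⟨_, hv, hr⟩

lemma valn_change {e : Exp} {ρ : Env} {x : String} {p : List String} {t : State}
    (e' : Exp) (h : Valn (e, ρ) (x :: p) t) : Valn (e', ρ) (x :: p) t := by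
  obtain ⟨v, hv, hr⟩ := valn_cons h
  exact Valn.cons hv hr

lemma valn_det : ∀ {p : List String} {s t1 t2 : State},
    Valn s p t1 → Valn s p t2 → t1 = t2 := by
  intro p
  induction p with
  | nil => intro s t1 t2 h1 h2; rw [valn_nil h1, valn_nil h2]
  | cons x p ih =>
      rintro ⟨e, ρ⟩ t1 t2 h1 h2
      obtain ⟨v, hv, hr⟩ := valn_cons h1
      obtain ⟨v', hv', hr'⟩ := valn_cons h2
      rw [hv] at hv'; cases hv'
      exact ih hr hr'

/-! ### Rank of values and the measure on states -/

mutual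
  noncomputable def Val.rank : Val → Ordinal
    | .clos _ _ ρ => Ordinal.lsub (fun y : String => rankO (ρ y))
  noncomputable def rankO : Option Val → Ordinal
    | none => 0
    | some v => v.rank
end

noncomputable def mu (s : State) : Ordinal.{0} :=
  Ordinal.lsub (fun y : ↥s.1.fv => rankO (s.2 ↑y))

lemma mu_toState_le (v : Val) : mu v.toState ≤ v.rank := by
  obtain ⟨a, b, ρ⟩ := v
  rw [Val.rank]
  exact Ordinal.lsub_le fun i => Ordinal.lt_lsub (fun y : String => rankO (ρ y)) ↑i

lemma mu_lt_of_mem {e : Exp} {ρ : Env} {y : String} {v : Val}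
    (hy : y ∈ e.fv) (hv : ρ y = some v) : mu v.toState < mu (e, ρ) := by
  refine lt_of_le_of_lt (mu_toState_le v) ?_
  have := Ordinal.lt_lsub (fun z : ↥e.fv => rankO (ρ ↑z)) ⟨y, hy⟩
  simpa [mu, hv, rankO] using this

lemma mu_le_of {e e' : Exp} {ρ ρ' : Env}
    (h1 : ∀ y ∈ e'.fv, ρ' y = ρ y) (h2 : e'.fv ⊆ e.fv) :
    mu (e', ρ') ≤ mu (e, ρ) := by
  refine Ordinal.lsub_le fun i => ?_
  have : rankO (ρ' ↑i) = rankO (ρ ↑i) := by rw [h1 ↑i i.2]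
  rw [this]
  exact Ordinal.lt_lsub (fun z : ↥e.fv => rankO (ρ ↑z)) ⟨↑i, h2 i.2⟩

/-! ### The strict order used for `dec` arcs -/

def NuLt (a b : State) : Prop :=
  mu a < mu b ∨ (mu a = mu b ∧ sizeOf a.1 < sizeOf b.1)

lemma nuLt_trans {a b c : State} (h1 : NuLt a b) (h2 : NuLt b c) : NuLt a c := by
  rcases h1 with h1 | ⟨h1, h1'⟩ <;> rcases h2 with h2 | ⟨h2, h2'⟩
  · exact Or.inl (h1.trans h2)
  · exact Or.inl (h2 ▸ h1)
  · exact Or.inl (h1 ▸ h2)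
  · exact Or.inr ⟨h1.trans h2, h1'.trans h2'⟩

lemma nuLt_irrefl {a : State} (h : NuLt a a) : False := by
  rcases h with h | ⟨_, h⟩
  · exact lt_irrefl _ h
  · omega

def GtD (a b : State) : Prop := Geq a b ∧ NuLt b a

lemma gtD_gt {a b : State} (h : GtD a b) : Gt a b :=
  ⟨h.1, fun he => nuLt_irrefl (he ▸ h.2)⟩

lemma gtD_trans {a b c : State} (h1 : GtD a b) (h2 : GtD b c) : GtD a c :=
  ⟨h1.1.trans h2.1, nuLt_trans h2.2 h1.2⟩

/-! ### The three basic strict steps -/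

lemma gtD_opl (e1 e2 : Exp) (ρ : Env) : GtD (Exp.app e1 e2, ρ) (e1, ρ) := by
  constructor
  · refine Relation.TransGen.single (Or.inr (Or.inl ?_))
    refine ⟨?_, (Exp.app_ne_left e1 e2), fun x _ => rfl⟩
    exact Set.mem_insert_iff.mpr (Or.inr (Or.inl (Exp.self_mem_subexp e1)))
  · have hle : mu (e1, ρ) ≤ mu (Exp.app e1 e2, ρ) :=
      mu_le_of (fun _ _ => rfl) (by simp [Exp.fv])
    rcases lt_or_eq_of_le hle with h | h
    · exact Or.inl h
    · refine Or.inr ⟨h, ?_⟩; simp <;> omega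

lemma gtD_opr (e1 e2 : Exp) (ρ : Env) : GtD (Exp.app e1 e2, ρ) (e2, ρ) := by
  constructor
  · refine Relation.TransGen.single (Or.inr (Or.inl ?_))
    refine ⟨?_, (Exp.app_ne_right e1 e2), fun x _ => rfl⟩
    exact Set.mem_insert_iff.mpr (Or.inr (Or.inr (Exp.self_mem_subexp e2)))
  · have hle : mu (e2, ρ) ≤ mu (Exp.app e1 e2, ρ) :=
      mu_le_of (fun _ _ => rfl) (by simp [Exp.fv])
    rcases lt_or_eq_of_le hle with h | h
    · exact Or.inl h
    · refine Or.inr ⟨h, ?_⟩; simp <;> omega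

lemma gtD_env {e : Exp} {ρ : Env} {y : String} {w : Val}
    (hy : y ∈ e.fv) (hw : ρ y = some w) : GtD (e, ρ) w.toState := by
  have hlt := mu_lt_of_mem hy hw
  constructor
  · refine Relation.TransGen.single (Or.inl ?_)
    exact ⟨Supp.env hy hw (Supp.refl _), fun he => lt_irrefl _ (he ▸ hlt)⟩
  · exact Or.inl hlt

lemma gtD_lamstrip {x : String} {e0 : Exp} (ρ0 : Env) (v2 : Val)
    (hx : x ∉ e0.fv) : GtD (Exp.lam x e0, ρ0) (e0, Env.update ρ0 x v2) := by
  have hfv : (Exp.lam x e0).fv = e0.fv := by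
    simp [Exp.fv, Finset.sdiff_eq_self_iff_disjoint, Finset.disjoint_singleton_right, hx]
  have hagree : ∀ y ∈ e0.fv, Env.update ρ0 x v2 y = ρ0 y := by
    intro y hy
    have : y ≠ x := fun h => hx (h ▸ hy)
    simp [Env.update, this]
  constructor
  · refine Relation.TransGen.single (Or.inr (Or.inl ?_))
    refine ⟨?_, (Exp.lam_ne_body x e0), fun y hy => (hagree y hy).symm⟩
    exact Set.mem_insert_iff.mpr (Or.inr (Exp.self_mem_subexp e0))
  · have h1 : mu (e0, Env.update ρ0 x v2) ≤ mu (Exp.lam x e0, ρ0) :=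
      mu_le_of hagree (by rw [hfv])
    have h2 : mu (Exp.lam x e0, ρ0) ≤ mu (e0, Env.update ρ0 x v2) :=
      mu_le_of (fun y hy => by rw [hfv] at hy; exact (hagree y hy).symm) (by rw [hfv])
    rcases lt_or_eq_of_le h1 with h | h
    · exact Or.inl h
    · refine Or.inr ⟨h, ?_⟩; simp <;> omega

end AuxSafety

/-! ### Labelled relation and strengthened safety -/

def ARel : Lab → State → State → Prop
  | Lab.eq, a, b => a = b
  | Lab.dec, a, b => GtD a b

lemma aRel_gtD_trans {r : Lab} {a b c : State} (h1 : ARel r a b) (h2 : GtD b c) :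
    GtD a c := by
  cases r with
  | eq => have h1' : a = b := h1; exact h1' ▸ h2
  | dec => exact gtD_trans h1 h2

lemma gtD_aRel_trans {r : Lab} {a b c : State} (h1 : GtD a b) (h2 : ARel r b c) :
    GtD a c := by
  cases r with
  | eq => have h2' : b = c := h2; exact h2' ▸ h1
  | dec => exact gtD_trans h1 h2

def Safe2 (G : ArcSet) (s1 s2 : State) : Prop :=
  (∀ p1 r p2 t1 t2, (p1, r, p2) ∈ G → Valn s1 p1 t1 → Valn s2 p2 t2 → ARel r t1 t2) ∧
  (∀ p1 r p2 t2, (p1, r, p2) ∈ G → Valn s2 p2 t2 → ∃ t1, Valn s1 p1 t1) ∧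
  (∀ p1 r p2, (p1, r, p2) ∈ G → p2 = [] ∨ ∃ y ∈ s2.1.fv, p2 = [y])

/-! ### The four cases of the mutual induction -/

lemma safe2_value (x : String) (e : Exp) (ρ : Env) :
    Safe2 (idEqS ↑(Exp.lam x e).fv) (Exp.lam x e, ρ) (Val.clos x e ρ).toState := by
  refine ⟨?_, ?_, ?_⟩
  · intro p1 r p2 t1 t2 harc hv1 hv2
    rcases harc with h | ⟨y, hy, h⟩ <;>
      (simp only [Prod.mk.injEq] at h; obtain ⟨rfl, rfl, rfl⟩ := h) <;>
      exact valn_det hv1 hv2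
  · intro p1 r p2 t2 harc hv2
    rcases harc with h | ⟨y, hy, h⟩ <;>
      (simp only [Prod.mk.injEq] at h; obtain ⟨rfl, rfl, rfl⟩ := h) <;>
      exact ⟨t2, hv2⟩
  · intro p1 r p2 harc
    rcases harc with h | ⟨y, hy, h⟩ <;>
      (simp only [Prod.mk.injEq] at h; obtain ⟨rfl, rfl, rfl⟩ := h)
    · exact Or.inl rfl
    · exact Or.inr ⟨y, by simpa [Val.toState] using hy, rfl⟩

lemma safe2_var {ρ : Env} {x : String} {v : Val} (h : ρ x = some v) :
    Safe2 (varGraphS x ↑v.toExp.fv) (Exp.var x, ρ) v.toState := by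
  obtain ⟨a, b, ρ'⟩ := v
  refine ⟨?_, ?_, ?_⟩
  · intro p1 r p2 t1 t2 harc hv1 hv2
    rcases harc with h' | ⟨y, hy, h'⟩ <;>
      (simp only [Prod.mk.injEq] at h'; obtain ⟨rfl, rfl, rfl⟩ := h')
    · obtain ⟨w, hw, hr⟩ := valn_cons hv1
      rw [h] at hw; cases hw
      have ht1 := valn_nil hr
      have ht2 := valn_nil hv2
      show t1 = t2
      rw [ht1, ht2]
    · obtain ⟨w, hw, hr⟩ := valn_cons hv1
      rw [h] at hw; cases hw
      have ht1 := valn_nil hr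
      have hv2' : Valn (Exp.lam a b, ρ') [y] t2 := hv2
      obtain ⟨w2, hw2, hr2⟩ := valn_cons hv2'
      have ht2 := valn_nil hr2
      show GtD t1 t2
      rw [ht1, ht2]
      exact gtD_env (by simpa [Val.toExp] using hy) hw2
  · intro p1 r p2 t2 harc hv2
    rcases harc with h' | ⟨y, hy, h'⟩ <;>
      (simp only [Prod.mk.injEq] at h'; obtain ⟨rfl, rfl, rfl⟩ := h') <;>
      exact ⟨_, Valn.cons h (Valn.nil _)⟩
  · intro p1 r p2 harc
    rcases harc with h' | ⟨y, hy, h'⟩ <;>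
      (simp only [Prod.mk.injEq] at h'; obtain ⟨rfl, rfl, rfl⟩ := h')
    · exact Or.inl rfl
    · exact Or.inr ⟨y, by simpa [Val.toExp, Val.toState] using hy, rfl⟩

lemma safe2_call {e1 e2 : Exp} {ρ ρ0 : Env} {x : String} {e0 : Exp} {v2 : Val}
    {G1 G2 : ArcSet}
    (IH1 : Safe2 G1 (e1, ρ) (Val.clos x e0 ρ0).toState)
    (IH2 : Safe2 G2 (e2, ρ) v2.toState) :
    Safe2 (unionRS ↑e0.fv (GminusS x ↑e0.fv G1) (GepsS x G2))
      (Exp.app e1 e2, ρ) (e0, Env.update ρ0 x v2) := by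
  obtain ⟨R1, B1, W1⟩ := IH1
  obtain ⟨R2, B2, W2⟩ := IH2
  -- info about targets of G1 arcs
  have W1' : ∀ p1 r z, (p1, r, [z]) ∈ G1 → z ∈ e0.fv ∧ z ≠ x := by
    intro p1 r z hG1
    rcases W1 p1 r [z] hG1 with h | ⟨y, hy, h⟩
    · simp at h
    · have hzy : z = y := by injection h
      subst hzy
      have : z ∈ (Exp.lam x e0).fv := hy
      rw [Exp.fv, Finset.mem_sdiff] at this
      exact ⟨this.1, by simpa using this.2⟩
  have h2z : ∀ z t2, z ≠ x → Valn (e0, Env.update ρ0 x v2) [z] t2 →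
      Valn (Exp.lam x e0, ρ0) [z] t2 := by
    intro z t2 hz hv
    obtain ⟨w, hw, hr⟩ := valn_cons hv
    rw [Env.update] at hw; simp [hz] at hw
    exact Valn.cons hw hr
  have hxx : ∀ t2, Valn (e0, Env.update ρ0 x v2) [x] t2 → t2 = v2.toState := by
    intro t2 hv
    obtain ⟨w, hw, hr⟩ := valn_cons hv
    rw [Env.update] at hw; simp at hw
    rw [valn_nil hr, hw]
  refine ⟨?_, ?_, ?_⟩
  · intro p1 r p2 t1 t2 harc hv1 hv2
    obtain ⟨hm, htar⟩ := harc
    rcases hm with hA | hB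
    · rcases hA with ⟨y, r', z, haeq, hG1⟩ | ⟨z, haeq, r', hG1⟩ | ⟨hx, p, haeq, r', hG1⟩ <;>
        (simp only [Prod.mk.injEq] at haeq)
      · obtain ⟨rfl, rfl, rfl⟩ := haeq
        have hz := (W1' _ _ _ hG1).2
        exact R1 _ _ _ _ _ hG1 (valn_change e1 hv1) (h2z _ _ hz hv2)
      · obtain ⟨rfl, rfl, rfl⟩ := haeq
        have hz := (W1' _ _ _ hG1).2
        have hrel := R1 _ _ _ _ _ hG1 (Valn.nil (e1, ρ)) (h2z _ _ hz hv2)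
        have ht1 := valn_nil hv1
        show GtD t1 t2
        rw [ht1]
        exact gtD_aRel_trans (gtD_opl e1 e2 ρ) hrel
      · obtain ⟨rfl, rfl, rfl⟩ := haeq
        have hx' : x ∉ e0.fv := by simpa using hx
        have hstrip := gtD_lamstrip ρ0 v2 hx'
        have ht2 := valn_nil hv2
        show GtD t1 t2
        rw [ht2]
        cases p1 with
        | nil =>
            have hrel := R1 _ _ _ _ _ hG1 (Valn.nil (e1, ρ))
              (Valn.nil ((Val.clos x e0 ρ0).toState))
            have ht1 := valn_nil hv1
            rw [ht1]
            exact gtD_trans (gtD_aRel_trans (gtD_opl e1 e2 ρ) hrel) hstrip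
        | cons w rest =>
            have hrel := R1 _ _ _ _ _ hG1 (valn_change e1 hv1)
              (Valn.nil ((Val.clos x e0 ρ0).toState))
            exact aRel_gtD_trans hrel hstrip
    · rcases hB with ⟨y, r', haeq, hG2⟩ | ⟨haeq, r', hG2⟩ <;>
        (simp only [Prod.mk.injEq] at haeq)
      · obtain ⟨rfl, rfl, rfl⟩ := haeq
        have hrel := R2 _ _ _ _ _ hG2 (valn_change e2 hv1) (Valn.nil v2.toState)
        rw [hxx _ hv2]
        exact hrel
      · obtain ⟨rfl, rfl, rfl⟩ := haeq
        have hrel := R2 _ _ _ _ _ hG2 (Valn.nil (e2, ρ)) (Valn.nil v2.toState)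
        have ht1 := valn_nil hv1
        show GtD t1 t2
        rw [ht1, hxx _ hv2]
        exact gtD_aRel_trans (gtD_opr e1 e2 ρ) hrel
  · intro p1 r p2 t2 harc hv2
    obtain ⟨hm, htar⟩ := harc
    rcases hm with hA | hB
    · rcases hA with ⟨y, r', z, haeq, hG1⟩ | ⟨z, haeq, r', hG1⟩ | ⟨hx, p, haeq, r', hG1⟩ <;>
        (simp only [Prod.mk.injEq] at haeq)
      · obtain ⟨rfl, rfl, rfl⟩ := haeq
        have hz := (W1' _ _ _ hG1).2
        obtain ⟨t1, ht⟩ := B1 _ _ _ _ hG1 (h2z _ _ hz hv2)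
        exact ⟨t1, valn_change _ ht⟩
      · obtain ⟨rfl, rfl, rfl⟩ := haeq
        exact ⟨_, Valn.nil _⟩
      · obtain ⟨rfl, rfl, rfl⟩ := haeq
        obtain ⟨t1, ht⟩ := B1 _ _ _ _ hG1 (Valn.nil ((Val.clos x e0 ρ0).toState))
        cases p1 with
        | nil => exact ⟨_, Valn.nil _⟩
        | cons w rest => exact ⟨t1, valn_change _ ht⟩
    · rcases hB with ⟨y, r', haeq, hG2⟩ | ⟨haeq, r', hG2⟩ <;>
        (simp only [Prod.mk.injEq] at haeq)
      · obtain ⟨rfl, rfl, rfl⟩ := haeq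
        obtain ⟨t1, ht⟩ := B2 _ _ _ _ hG2 (Valn.nil v2.toState)
        exact ⟨t1, valn_change _ ht⟩
      · obtain ⟨rfl, rfl, rfl⟩ := haeq
        exact ⟨_, Valn.nil _⟩
  · intro p1 r p2 harc
    obtain ⟨hm, htar⟩ := harc
    rcases htar with h | ⟨y, hy, h⟩
    · exact Or.inl h
    · exact Or.inr ⟨y, by simpa using hy, h⟩

lemma labels_elim {G1 G2 : ArcSet} {p1 p2 : NP} {r : Lab}
    (h : r ∈ labelsA G1 G2 p1 p2) :
    ∃ y r1 r2, (p1, r1, y) ∈ G1 ∧ (y, r2, p2) ∈ G2 ∧ (r = r1 ∨ r = r2) := by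
  obtain ⟨y, s, hcase⟩ := h
  rcases hcase with ⟨h1, h2⟩ | ⟨h1, h2⟩
  · exact ⟨y, r, s, h1, h2, Or.inl rfl⟩
  · exact ⟨y, s, r, h1, h2, Or.inr rfl⟩

lemma labels_both {G1 G2 : ArcSet} {p1 p2 y : NP} {r1 r2 : Lab}
    (h1 : (p1, r1, y) ∈ G1) (h2 : (y, r2, p2) ∈ G2) :
    r1 ∈ labelsA G1 G2 p1 p2 ∧ r2 ∈ labelsA G1 G2 p1 p2 :=
  ⟨⟨y, r2, Or.inl ⟨h1, h2⟩⟩, ⟨y, r1, Or.inr ⟨h1, h2⟩⟩⟩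

lemma safe2_apply {s s' : State} {v : Val} {G' G : ArcSet}
    (IH' : Safe2 G' s s') (IH : Safe2 G s' v.toState) :
    Safe2 (compA G' G) s v.toState := by
  obtain ⟨R1, B1, W1⟩ := IH'
  obtain ⟨R2, B2, W2⟩ := IH
  have key : ∀ p1 r p2, (p1, r, p2) ∈ compA G' G →
      ∃ y r1 r2, (p1, r1, y) ∈ G' ∧ (y, r2, p2) ∈ G ∧
        ((r = Lab.dec ∧ (r1 = Lab.dec ∨ r2 = Lab.dec)) ∨
         (r = Lab.eq ∧ r1 = Lab.eq ∧ r2 = Lab.eq)) := by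
    intro p1 r p2 harc
    rcases harc with ⟨q1, q2, haeq, hdec⟩ | ⟨q1, q2, haeq, heqs⟩ <;>
      (simp only [Prod.mk.injEq] at haeq; obtain ⟨rfl, rfl, rfl⟩ := haeq)
    · obtain ⟨y, r1, r2, hg1, hg2, hor⟩ := labels_elim hdec
      refine ⟨y, r1, r2, hg1, hg2, Or.inl ⟨rfl, ?_⟩⟩
      rcases hor with h | h
      · exact Or.inl h.symm
      · exact Or.inr h.symm
    · have hmem : Lab.eq ∈ labelsA G' G p1 p2 := by rw [heqs]; rfl
      obtain ⟨y, r1, r2, hg1, hg2, _⟩ := labels_elim hmem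
      have hb := labels_both hg1 hg2
      have hr1 : r1 = Lab.eq := by have := hb.1; rw [heqs] at this; exact this
      have hr2 : r2 = Lab.eq := by have := hb.2; rw [heqs] at this; exact this
      exact ⟨y, r1, r2, hg1, hg2, Or.inr ⟨rfl, hr1, hr2⟩⟩
  refine ⟨?_, ?_, ?_⟩
  · intro p1 r p2 t1 t2 harc hv1 hv2
    obtain ⟨y, r1, r2, hg1, hg2, hcase⟩ := key _ _ _ harc
    obtain ⟨tm, hm⟩ := B2 _ _ _ _ hg2 hv2
    have hA := R1 _ _ _ _ _ hg1 hv1 hm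
    have hB := R2 _ _ _ _ _ hg2 hm hv2
    rcases hcase with ⟨rfl, hor⟩ | ⟨rfl, rfl, rfl⟩
    · show GtD t1 t2
      rcases hor with rfl | rfl
      · exact gtD_aRel_trans hA hB
      · exact aRel_gtD_trans hA hB
    · show t1 = t2
      exact hA.trans hB
  · intro p1 r p2 t2 harc hv2
    obtain ⟨y, r1, r2, hg1, hg2, _⟩ := key _ _ _ harc
    obtain ⟨tm, hm⟩ := B2 _ _ _ _ hg2 hv2
    exact B1 _ _ _ _ hg1 hm
  · intro p1 r p2 harc
    obtain ⟨y, r1, r2, hg1, hg2, _⟩ := key _ _ _ harc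
    exact W2 _ _ _ hg2

/-! ### Mutual induction and the main theorem -/

lemma evalG_safe2 {s : State} {v : Val} {G : ArcSet} (h : EvalG s v G) :
    Safe2 G s v.toState :=
  EvalG.rec (motive_1 := fun s v G _ => Safe2 G s v.toState)
    (motive_2 := fun s s' G _ => Safe2 G s s')
    (fun x e ρ => safe2_value x e ρ)
    (fun hρ => safe2_var hρ)
    (fun _ _ ih1 ih2 => safe2_apply ih1 ih2)
    (fun _ _ ih1 ih2 => safe2_call ih1 ih2)
    h

lemma callGc_safe2 {s s' : State} {G : ArcSet} (h : CallGc s s' G) :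
    Safe2 G s s' :=
  CallGc.rec (motive_1 := fun s v G _ => Safe2 G s v.toState)
    (motive_2 := fun s s' G _ => Safe2 G s s')
    (fun x e ρ => safe2_value x e ρ)
    (fun hρ => safe2_var hρ)
    (fun _ _ ih1 ih2 => safe2_apply ih1 ih2)
    (fun _ _ ih1 ih2 => safe2_call ih1 ih2)
    h

lemma safe2_safeArcs {G : ArcSet} {s1 s2 : State} (h : Safe2 G s1 s2) :
    SafeArcs G s1 s2 := by
  obtain ⟨R, _, _⟩ := h
  constructor
  · intro p1 p2 harc t1 t2 hv1 hv2
    exact R p1 Lab.eq p2 t1 t2 harc hv1 hv2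
  · intro p1 p2 harc t1 t2 hv1 hv2
    exact gtD_gt (R p1 Lab.dec p2 t1 t2 harc hv1 hv2)

lemma safeArcs_idDec {e1 e2 ei : Exp} {ρ : Env}
    (hd : GtD (Exp.app e1 e2, ρ) (ei, ρ)) :
    SafeArcs (idDecS ↑ei.fv) (Exp.app e1 e2, ρ) (ei, ρ) := by
  constructor
  · intro p1 p2 harc t1 t2 hv1 hv2
    rcases harc with h | ⟨y, hy, h⟩
    · simp at h
    · simp only [Prod.mk.injEq] at h; obtain ⟨rfl, -, rfl⟩ := h
      exact valn_det (valn_change ei hv1) hv2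
  · intro p1 p2 harc t1 t2 hv1 hv2
    rcases harc with h | ⟨y, hy, h⟩
    · simp only [Prod.mk.injEq] at h; obtain ⟨rfl, -, rfl⟩ := h
      rw [valn_nil hv1, valn_nil hv2]
      exact gtD_gt hd
    · simp at h

theorem extracted_graphs_safe' :
    (∀ (s s' : State) (G : ArcSet), CallGAny s s' G → SafeArcs G s s') ∧
    (∀ (s : State) (v : Val) (G : ArcSet), EvalG s v G → SafeArcs G s v.toState) := by
  constructor
  · rintro s s' G (h | h | h)
    · cases h with
      | oper e1 e2 ρ => exact safeArcs_idDec (gtD_opl e1 e2 ρ)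
    · cases h with
      | opnd e2 h1 => exact safeArcs_idDec (gtD_opr _ e2 _)
    · exact safe2_safeArcs (callGc_safe2 h)
  · intro s v G h
    exact safe2_safeArcs (evalG_safe2 h)

/-- The extracted graphs are safe: if `s → s', G` or `s ⇓ s', G` in the
graph-generating environment semantics, then `G` is safe for `(s,s')`. -/
theorem extracted_graphs_safe :
    (∀ (s s' : State) (G : ArcSet), CallGAny s s' G → SafeArcs G s s') ∧
    (∀ (s : State) (v : Val) (G : ArcSet), EvalG s v G → SafeArcs G s v.toState) :=
  extracted_graphs_safe'
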